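/- Let T be a triangulation of a subset A of Δ^{m-1} × Δ^{n-1} and let σ ∈ T. Then there exists τ ∈ T with σ ⊆ τ such that every vertex f ∈ Δ^{n-1} that is adjacent in G(A) to a vertex of G(σ) is adjacent in G(τ) to a vertex of G(σ). -/

import Mathlib

open Finset

section Defs

variable {ι V : Type*} [AddCommGroup V] [Module ℝ V]

/-- `F` is a face of the cell `C` (w.r.t. the point map `p`): the set of points of `C`
minimizing some linear functional. -/
def IsFaceOf (p : ι → V) (C F : Finset ι) : Prop :=
  ∃ φ : V →ₗ[ℝ] ℝ, (↑F : Set ι) = {x | x ∈ C ∧ ∀ y ∈ C, φ (p x) ≤ φ (p y)}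

/-- `S` is a polyhedral subdivision of the point set `A` (w.r.t. the point map `p`). -/
def IsSubdivision (p : ι → V) (A : Finset ι) (S : Set (Finset ι)) : Prop :=
  (∀ C ∈ S, C ⊆ A) ∧
  (∀ C ∈ S, ∀ F : Finset ι, IsFaceOf p C F → F ∈ S) ∧
  (∀ C ∈ S, ∀ C' ∈ S, ∃ F : Finset ι, IsFaceOf p C F ∧ IsFaceOf p C' F ∧
    convexHull ℝ (p '' ↑C) ∩ convexHull ℝ (p '' ↑C') = convexHull ℝ (p '' ↑F)) ∧
  (⋃ C ∈ S, convexHull ℝ (p '' ↑C)) = convexHull ℝ (p '' ↑A)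

/-- A triangulation: a subdivision all of whose cells are affinely independent. -/
def IsTriangulation (p : ι → V) (A : Finset ι) (S : Set (Finset ι)) : Prop :=
  IsSubdivision p A S ∧ ∀ C ∈ S, AffineIndependent ℝ (fun x : ↥C => p ↑x)

/-- `X` is a circuit: affinely dependent, but every proper subset is affinely independent. -/
def IsCircuit (p : ι → V) (X : Finset ι) : Prop :=
  ¬ AffineIndependent ℝ (fun x : ↥X => p ↑x) ∧
  ∀ Y : Finset ι, Y ⊂ X → AffineIndependent ℝ (fun x : ↥Y => p ↑x)

/-- The triangulation `T_X^+` of a circuit `X` with dependence coefficients `w`: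
all subsets of `X` not containing `X⁺ = {x ∈ X : w x > 0}`. -/
def Tpos (X : Finset ι) (w : ι → ℝ) : Set (Finset ι) :=
  {σ | σ ⊆ X ∧ ∃ x ∈ X, 0 < w x ∧ x ∉ σ}

/-- The triangulation `T_X^-` of a circuit `X` with dependence coefficients `w`:
all subsets of `X` not containing `X⁻ = {x ∈ X : w x < 0}`. -/
def Tneg (X : Finset ι) (w : ι → ℝ) : Set (Finset ι) :=
  {σ | σ ⊆ X ∧ ∃ x ∈ X, w x < 0 ∧ x ∉ σ}

end Defs

/-- Embedding of the vertex set of `Δ^{m-1} × Δ^{n-1}` in `ℝ^m × ℝ^n`. -/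
def emb (m n : ℕ) : Fin m × Fin n → (Fin m → ℝ) × (Fin n → ℝ) :=
  fun q => (Pi.single q.1 1, Pi.single q.2 1)

lemma emb_injective (m n : ℕ) : Function.Injective (emb m n) := by
  intro q q' h
  have h1 := congrFun (congrArg Prod.fst h) q'.1
  have h2 := congrFun (congrArg Prod.snd h) q'.2
  simp only [emb, Pi.single_apply] at h1 h2
  have e1 : q'.1 = q.1 := by by_contra hc; simp [hc, (Ne.symm hc)] at h1
  have e2 : q'.2 = q.2 := by by_contra hc; simp [hc, (Ne.symm hc)] at h2
  exact Prod.ext e1.symm e2.symm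

lemma fst_sum_emb {m n : ℕ} (w : Fin m × Fin n → ℝ) (i : Fin m) :
    (∑ q : Fin m × Fin n, w q • emb m n q).1 i
      = ∑ q : Fin m × Fin n, (if q.1 = i then w q else 0) := by
  rw [Prod.fst_sum, Finset.sum_apply]
  refine Finset.sum_congr rfl fun q _ => ?_
  simp [emb, Pi.single_apply, eq_comm]

lemma snd_sum_emb {m n : ℕ} (w : Fin m × Fin n → ℝ) (j : Fin n) :
    (∑ q : Fin m × Fin n, w q • emb m n q).2 j
      = ∑ q : Fin m × Fin n, (if q.2 = j then w q else 0) := by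
  rw [Prod.snd_sum, Finset.sum_apply]
  refine Finset.sum_congr rfl fun q _ => ?_
  simp [emb, Pi.single_apply, eq_comm]

lemma mem_hull_iff {m n : ℕ} (τ : Finset (Fin m × Fin n)) (v : (Fin m → ℝ) × (Fin n → ℝ)) :
    v ∈ convexHull ℝ (emb m n '' ↑τ) ↔
      ∃ w : Fin m × Fin n → ℝ, (∀ q, 0 ≤ w q) ∧ (∀ q, w q ≠ 0 → q ∈ τ) ∧
        (∑ q : Fin m × Fin n, w q) = 1 ∧ (∑ q : Fin m × Fin n, w q • emb m n q) = v := by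
  classical
  constructor
  · intro hv
    rw [← Finset.coe_image, Finset.convexHull_eq] at hv
    obtain ⟨w', hw'0, hw'1, hw'c⟩ := hv
    refine ⟨fun q => if q ∈ τ then w' (emb m n q) else 0, fun q => ?_, fun q hq => ?_, ?_, ?_⟩
    · dsimp only; split
      · exact hw'0 _ (Finset.mem_image_of_mem _ ‹_›)
      · exact le_rfl
    · by_contra hqτ; simp only [hqτ, if_false] at hq; exact hq rfl
    · dsimp only
      rw [Finset.sum_ite_mem, Finset.univ_inter,
        ← Finset.sum_image (fun a _ b _ hab => emb_injective m n hab)]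
      exact hw'1
    · have : ∀ q ∈ Finset.univ, (if q ∈ τ then w' (emb m n q) else 0) • emb m n q
          = if q ∈ τ then w' (emb m n q) • emb m n q else 0 := by
        intro q _; split <;> simp
      dsimp only
      rw [Finset.sum_congr rfl this, Finset.sum_ite_mem, Finset.univ_inter]
      rw [Finset.centerMass_eq_of_sum_1 _ _ hw'1,
        Finset.sum_image (fun a _ b _ hab => emb_injective m n hab)] at hw'c
      simpa using hw'c
  · rintro ⟨w, hw0, hsupp, hw1, hwv⟩
    have hsub : ∀ q ∈ Finset.univ, q ∉ τ → w q • emb m n q = 0 := by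
      intro q _ hq
      rcases eq_or_ne (w q) 0 with h | h
      · simp [h]
      · exact absurd (hsupp q h) hq
    have hsum : ∑ q ∈ τ, w q = 1 := by
      rw [Finset.sum_subset (Finset.subset_univ τ) fun q hq hqτ => ?_, hw1]
      rcases eq_or_ne (w q) 0 with h | h
      · exact h
      · exact absurd (hsupp q h) hqτ
    have hv : τ.centerMass w (emb m n) = v := by
      rw [Finset.centerMass_eq_of_sum_1 _ _ hsum,
        Finset.sum_subset (Finset.subset_univ τ) hsub, hwv]
    rw [← hv]
    exact Finset.centerMass_mem_convexHull _ (fun q _ => hw0 q) (by rw [hsum]; norm_num)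
      (fun q hq => Set.mem_image_of_mem _ hq)


set_option maxHeartbeats 2000000 in
/-- For any `σ` in a triangulation `T` of `A ⊆ Δ^{m-1} × Δ^{n-1}`, there is `τ ∈ T` with
`σ ⊆ τ` such that every vertex `f_j ∈ Δ^{n-1}` adjacent in `G(A)` to a vertex of `G(σ)` is
adjacent in `G(τ)` to a vertex of `G(σ)`. -/
theorem grow_simplex {m n : ℕ} (A : Finset (Fin m × Fin n))
    (T : Set (Finset (Fin m × Fin n))) (hT : IsTriangulation (emb m n) A T)
    (σ : Finset (Fin m × Fin n)) (hσ : σ ∈ T) :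
    ∃ τ ∈ T, σ ⊆ τ ∧
      ∀ j : Fin n, (∃ i : Fin m, (i, j) ∈ A ∧ ∃ j' : Fin n, (i, j') ∈ σ) →
        ∃ i : Fin m, (i, j) ∈ τ ∧ ∃ j' : Fin n, (i, j') ∈ σ := by
  classical
  obtain ⟨⟨hTA, hface, hmeet, hcover⟩, hindep⟩ := hT
  by_cases hJne : ∃ j : Fin n, ∃ i : Fin m, (i, j) ∈ A ∧ ∃ j' : Fin n, (i, j') ∈ σ
  swap
  · exact ⟨σ, hσ, subset_rfl, fun j hj => absurd ⟨j, hj⟩ hJne⟩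
  obtain ⟨j₀, i₀, hij₀A, j₀', hσne'⟩ := hJne
  have hσne : σ.Nonempty := ⟨_, hσne'⟩
  have hkpos : 0 < (σ.card : ℝ) := by exact_mod_cast Finset.card_pos.mpr hσne
  obtain ⟨J, hJdef⟩ : ∃ a : Finset (Fin n), a = Finset.univ.filter (fun j => ∃ i, (i, j) ∈ A ∧ ∃ j', (i, j') ∈ σ) := ⟨_, rfl⟩
  have hchoice : ∀ j : Fin n, ∃ i : Fin m, j ∈ J → ((i, j) ∈ A ∧ ∃ j', (i, j') ∈ σ) := by
    intro j
    by_cases hj : j ∈ J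
    · rw [hJdef] at hj
      obtain ⟨i, hi⟩ := (Finset.mem_filter.mp hj).2
      exact ⟨i, fun _ => hi⟩
    · exact ⟨i₀, fun h => absurd h hj⟩
  choose I hIspec using hchoice
  obtain ⟨wx, hwxdef⟩ : ∃ a : Fin m × Fin n → ℝ, a = fun q => if q ∈ σ then (σ.card : ℝ)⁻¹ else 0 := ⟨_, rfl⟩
  have hwx0 : ∀ q, 0 ≤ wx q := by
    intro q; rw [hwxdef]; dsimp only; split
    · positivity
    · exact le_rfl
  have hwxsupp : ∀ q, wx q ≠ 0 → q ∈ σ := by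
    intro q hq; by_contra h; rw [hwxdef] at hq; simp only [h, if_false] at hq; exact hq rfl
  have hwxsum : ∑ q : Fin m × Fin n, wx q = 1 := by
    rw [hwxdef]; dsimp only
    rw [Finset.sum_ite_mem, Finset.univ_inter, Finset.sum_const, nsmul_eq_mul]
    field_simp
  obtain ⟨x, hxdef⟩ : ∃ a, a = ∑ q : Fin m × Fin n, wx q • emb m n q := ⟨_, rfl⟩
  have hxσ : x ∈ convexHull ℝ (emb m n '' ↑σ) :=
    (mem_hull_iff σ x).mpr ⟨wx, hwx0, hwxsupp, hwxsum, hxdef.symm⟩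
  obtain ⟨z, hzdef⟩ : ∃ a, a = ∑ j ∈ J, emb m n (I j, j) := ⟨_, rfl⟩
  obtain ⟨U, hUdef⟩ : ∃ a : Set ((Fin m → ℝ) × (Fin n → ℝ)), a = ⋂ C ∈ {C | C ∈ T ∧ x ∉ convexHull ℝ (emb m n '' ↑C)},
      (convexHull ℝ (emb m n '' (C : Set (Fin m × Fin n))))ᶜ := ⟨_, rfl⟩
  have hUopen : IsOpen U := by
    rw [hUdef]
    apply Set.Finite.isOpen_biInter (Set.toFinite _)
    intro C hC
    exact (Set.Finite.isClosed_convexHull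
      (𝕜 := ℝ) (hs := (C : Set (Fin m × Fin n)).toFinite.image _)).isOpen_compl
  have hxU : x ∈ U := by
    rw [hUdef, Set.mem_iInter₂]
    exact fun C hC => hC.2
  obtain ⟨δ, hδ0, hball⟩ := Metric.isOpen_iff.mp hUopen x hxU
  obtain ⟨v, hvdef⟩ : ∃ a, a = z - (J.card : ℝ) • x := ⟨_, rfl⟩
  obtain ⟨ε, hεdef⟩ : ∃ a : ℝ, a = min ((J.card : ℝ) + 1)⁻¹ (δ / (‖v‖ + 1)) := ⟨_, rfl⟩
  have hc1 : (0:ℝ) < (J.card : ℝ) + 1 := by positivity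
  have hvpos : (0:ℝ) < ‖v‖ + 1 := add_pos_of_nonneg_of_pos (norm_nonneg v) one_pos
  have hε0 : 0 < ε := by rw [hεdef]; exact lt_min (inv_pos.mpr hc1) (div_pos hδ0 hvpos)
  have hε1 : ε * (J.card : ℝ) ≤ 1 := by
    have h1 : ε ≤ ((J.card : ℝ) + 1)⁻¹ := by rw [hεdef]; exact min_le_left _ _
    have h2 : ε * (J.card:ℝ) ≤ ((J.card:ℝ)+1)⁻¹ * (J.card:ℝ) :=
      mul_le_mul_of_nonneg_right h1 (Nat.cast_nonneg _)
    have h3 : ((J.card:ℝ)+1)⁻¹ * (J.card:ℝ) ≤ 1 := by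
      rw [inv_mul_le_iff₀ hc1]; linarith
    linarith
  have hεnn : 0 ≤ 1 - ε * (J.card:ℝ) := by linarith
  obtain ⟨wy, hwydef⟩ : ∃ a : Fin m × Fin n → ℝ, a = fun q =>
    (1 - ε * (J.card:ℝ)) * wx q + ε * ∑ j ∈ J, (if (I j, j) = q then 1 else 0) := ⟨_, rfl⟩
  have hitenn : ∀ q : Fin m × Fin n, (0:ℝ) ≤ ∑ j ∈ J, (if (I j, j) = q then 1 else 0) := by
    intro q; apply Finset.sum_nonneg; intro j _; split <;> norm_num
  have hwy0 : ∀ q, 0 ≤ wy q := by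
    intro q; rw [hwydef]; dsimp only
    exact add_nonneg (mul_nonneg hεnn (hwx0 q)) (mul_nonneg hε0.le (hitenn q))
  have hwysupp : ∀ q, wy q ≠ 0 → q ∈ A := by
    intro q hq
    by_contra hqA
    apply hq
    rw [hwydef]; dsimp only
    have h1 : wx q = 0 := by
      by_contra h; exact hqA (hTA σ hσ (hwxsupp q h))
    have h2 : ∑ j ∈ J, (if (I j, j) = q then (1:ℝ) else 0) = 0 := by
      apply Finset.sum_eq_zero; intro j hj
      rw [if_neg]; intro h
      exact hqA (h ▸ (hIspec j hj).1)
    rw [h1, h2]; ring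
  have hswap : ∑ q : Fin m × Fin n, ∑ j ∈ J, (if (I j, j) = q then (1:ℝ) else 0)
      = (J.card : ℝ) := by
    rw [Finset.sum_comm]
    rw [Finset.sum_congr rfl (fun j _ => Finset.sum_ite_eq Finset.univ (I j, j) (fun _ => (1:ℝ)))]
    simp
  have hwysum : ∑ q : Fin m × Fin n, wy q = 1 := by
    rw [hwydef]; dsimp only
    rw [Finset.sum_add_distrib, ← Finset.mul_sum, ← Finset.mul_sum, hwxsum, hswap]
    ring
  obtain ⟨y, hydef⟩ : ∃ a, a = ∑ q : Fin m × Fin n, wy q • emb m n q := ⟨_, rfl⟩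
  have hsecond : ∀ j ∈ J,
      (∑ q : Fin m × Fin n, (ε * (if (I j, j) = q then (1:ℝ) else 0)) • emb m n q)
        = ε • emb m n (I j, j) := by
    intro j _
    have h1 : ∀ q ∈ Finset.univ, (ε * (if (I j, j) = q then (1:ℝ) else 0)) • emb m n q
        = if (I j, j) = q then ε • emb m n q else 0 := by
      intro q _; split <;> simp
    rw [Finset.sum_congr rfl h1, Finset.sum_ite_eq]
    simp
  have hyrepr : y = (1 - ε * (J.card:ℝ)) • x + ε • z := by
    calc y = (∑ q : Fin m × Fin n, ((1 - ε * (J.card:ℝ)) * wx q) • emb m n q)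
          + ∑ q : Fin m × Fin n,
              (ε * ∑ j ∈ J, (if (I j, j) = q then (1:ℝ) else 0)) • emb m n q := by
          rw [hydef, ← Finset.sum_add_distrib]
          refine Finset.sum_congr rfl fun q _ => ?_
          rw [hwydef]; dsimp only; rw [add_smul]
      _ = (1 - ε * (J.card:ℝ)) • x + ε • z := by
          congr 1
          · rw [hxdef, Finset.smul_sum]
            exact Finset.sum_congr rfl fun q _ => (smul_smul _ _ _).symm
          · rw [hzdef, Finset.smul_sum]
            calc ∑ q : Fin m × Fin n,
                  (ε * ∑ j ∈ J, (if (I j, j) = q then (1:ℝ) else 0)) • emb m n q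
                = ∑ q : Fin m × Fin n, ∑ j ∈ J,
                    (ε * (if (I j, j) = q then (1:ℝ) else 0)) • emb m n q := by
                  refine Finset.sum_congr rfl fun q _ => ?_
                  rw [Finset.mul_sum, Finset.sum_smul]
              _ = ∑ j ∈ J, ∑ q : Fin m × Fin n,
                    (ε * (if (I j, j) = q then (1:ℝ) else 0)) • emb m n q :=
                  Finset.sum_comm
              _ = ∑ j ∈ J, ε • emb m n (I j, j) := Finset.sum_congr rfl hsecond
  have hyA : y ∈ convexHull ℝ (emb m n '' ↑A) :=
    (mem_hull_iff A y).mpr ⟨wy, hwy0, hwysupp, hwysum, hydef.symm⟩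
  rw [← hcover] at hyA
  obtain ⟨τ, hτT, hyτ⟩ := Set.mem_iUnion₂.mp hyA
  have hyx : y - x = ε • v := by
    rw [hyrepr, hvdef]
    module
  have hydist : dist y x < δ := by
    rw [dist_eq_norm, hyx, norm_smul, Real.norm_eq_abs, abs_of_pos hε0]
    have h2 : ε ≤ δ / (‖v‖ + 1) := by rw [hεdef]; exact min_le_right _ _
    have h3 : ε * (‖v‖ + 1) ≤ δ := (le_div_iff₀ (by positivity)).mp h2
    nlinarith [norm_nonneg v, hε0]
  have hyU : y ∈ U := hball (Metric.mem_ball.mpr hydist)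
  have hxτ : x ∈ convexHull ℝ (emb m n '' ↑τ) := by
    by_contra hxc
    have hyc : y ∈ (convexHull ℝ (emb m n '' (τ : Set (Fin m × Fin n))))ᶜ := by
      rw [hUdef] at hyU
      exact Set.mem_iInter₂.mp hyU τ ⟨hτT, hxc⟩
    exact hyc hyτ
  obtain ⟨F, hFσ, hFτ, hhull⟩ := hmeet σ hσ τ hτT
  have hFsubσ : F ⊆ σ := by
    obtain ⟨φ, hφ⟩ := hFσ
    intro q hq
    have hq' : q ∈ (↑F : Set (Fin m × Fin n)) := hq
    rw [hφ] at hq'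
    exact hq'.1
  have hFsubτ : F ⊆ τ := by
    obtain ⟨φ, hφ⟩ := hFτ
    intro q hq
    have hq' : q ∈ (↑F : Set (Fin m × Fin n)) := hq
    rw [hφ] at hq'
    exact hq'.1
  have hxF : x ∈ convexHull ℝ (emb m n '' ↑F) := by
    rw [← hhull]; exact ⟨hxσ, hxτ⟩
  obtain ⟨wF, hwF0, hwFsupp, hwFsum, hwFx⟩ := (mem_hull_iff F x).mp hxF
  have hwFσ : ∀ q, wF q ≠ 0 → q ∈ σ := fun q hq => hFsubσ (hwFsupp q hq)
  have hsumσ : ∑ q ∈ σ, wF q = 1 := by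
    rw [Finset.sum_subset (Finset.subset_univ σ) (fun q _ hq => ?_), hwFsum]
    by_contra h; exact hq (hwFσ q h)
  have hsumσ2 : ∑ q ∈ σ, wF q • emb m n q = x := by
    rw [Finset.sum_subset (Finset.subset_univ σ) (fun q _ hq => ?_), hwFx]
    rcases eq_or_ne (wF q) 0 with h | h
    · rw [h, zero_smul]
    · exact absurd (hwFσ q h) hq
  have hxσ2 : ∑ q ∈ σ, (σ.card:ℝ)⁻¹ • emb m n q = x := by
    have h1 : ∑ q ∈ σ, wx q • emb m n q = x := by
      rw [hxdef]
      exact Finset.sum_subset (Finset.subset_univ σ) (fun q _ hq => by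
        rw [hwxdef]; dsimp only; rw [if_neg hq, zero_smul])
    rw [← h1]
    exact Finset.sum_congr rfl fun q hq => by rw [hwxdef]; dsimp only; rw [if_pos hq]
  have hσF : σ ⊆ F := by
    intro q hq
    have hsum0 : ∑ a : ↥σ, ((σ.card:ℝ)⁻¹ - wF ↑a) = 0 := by
      rw [Finset.sum_sub_distrib, Finset.sum_const, Finset.card_univ, Fintype.card_coe,
        nsmul_eq_mul, Finset.sum_coe_sort σ (fun q => wF q), hsumσ]
      field_simp
      simp
    have hcomb0 : ∑ a : ↥σ, ((σ.card:ℝ)⁻¹ - wF ↑a) • emb m n ↑a = 0 := by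
      have hterm : ∀ a : ↥σ, ((σ.card:ℝ)⁻¹ - wF ↑a) • emb m n ↑a
          = (σ.card:ℝ)⁻¹ • emb m n ↑a - wF ↑a • emb m n ↑a := fun a => sub_smul _ _ _
      rw [Finset.sum_congr rfl (fun a _ => hterm a), Finset.sum_sub_distrib,
        Finset.sum_coe_sort σ (fun q => (σ.card:ℝ)⁻¹ • emb m n q),
        Finset.sum_coe_sort σ (fun q => wF q • emb m n q), hxσ2, hsumσ2, sub_self]
    have hai := affineIndependent_iff.mp (hindep σ hσ) Finset.univ
      (fun a : ↥σ => (σ.card:ℝ)⁻¹ - wF ↑a) hsum0 hcomb0 ⟨q, hq⟩ (Finset.mem_univ _)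
    dsimp only at hai
    apply hwFsupp
    intro h0
    rw [h0, sub_zero] at hai
    exact absurd hai (by positivity)
  refine ⟨τ, hτT, hσF.trans hFsubτ, ?_⟩
  intro j hj
  have hjJ : j ∈ J := by rw [hJdef]; exact Finset.mem_filter.mpr ⟨Finset.mem_univ _, hj⟩
  obtain ⟨u, hu0, husupp, husum, huy⟩ := (mem_hull_iff τ y).mp hyτ
  have hx2 : 0 ≤ x.2 j := by
    rw [hxdef, snd_sum_emb]
    apply Finset.sum_nonneg; intro q _; split
    · exact hwx0 q
    · exact le_rfl
  have hz2 : z.2 j = 1 := by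
    rw [hzdef, Prod.snd_sum, Finset.sum_apply]
    have h1 : ∀ j' ∈ J, (emb m n (I j', j')).2 j = if j = j' then (1:ℝ) else 0 := by
      intro j' _; simp [emb, Pi.single_apply]
    rw [Finset.sum_congr rfl h1, Finset.sum_ite_eq J j (fun _ => (1:ℝ)), if_pos hjJ]
  have hy2 : ε ≤ y.2 j := by
    rw [hyrepr]
    have h1 : ((1 - ε * (J.card:ℝ)) • x + ε • z).2 j
        = (1 - ε * (J.card:ℝ)) * x.2 j + ε * z.2 j := rfl
    rw [h1, hz2]
    nlinarith [hx2, hεnn]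
  have hy2' : y.2 j = ∑ q : Fin m × Fin n, (if q.2 = j then u q else 0) := by
    rw [← huy, snd_sum_emb]
  have hpos : 0 < ∑ q : Fin m × Fin n, (if q.2 = j then u q else 0) := by
    rw [← hy2']; exact lt_of_lt_of_le hε0 hy2
  have hex : ∃ q : Fin m × Fin n, 0 < (if q.2 = j then u q else 0) := by
    by_contra h
    push_neg at h
    have := Finset.sum_nonpos (fun q (_ : q ∈ Finset.univ) => h q)
    linarith
  obtain ⟨q, hq⟩ := hex
  have hq2 : q.2 = j := by by_contra h; rw [if_neg h] at hq; exact lt_irrefl 0 hq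
  rw [if_pos hq2] at hq
  have hqτ : q ∈ τ := husupp q (ne_of_gt hq)
  have hqeq : (q.1, j) = q := by rw [← hq2]
  have hy1 : u q ≤ y.1 q.1 := by
    rw [← huy, fst_sum_emb]
    calc u q = (if q.1 = q.1 then u q else 0) := (if_pos rfl).symm
      _ ≤ ∑ q' : Fin m × Fin n, (if q'.1 = q.1 then u q' else 0) :=
        Finset.single_le_sum (f := fun q' : Fin m × Fin n => if q'.1 = q.1 then u q' else 0)
          (fun q' _ => by split; exacts [hu0 q', le_rfl]) (Finset.mem_univ q)
  have hy1pos : 0 < y.1 q.1 := lt_of_lt_of_le hq hy1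
  have hx1 : x.1 q.1 = ∑ q' : Fin m × Fin n, (if q'.1 = q.1 then wx q' else 0) := by
    rw [hxdef, fst_sum_emb]
  have hz1 : z.1 q.1 = ∑ j' ∈ J, (if q.1 = I j' then (1:ℝ) else 0) := by
    rw [hzdef, Prod.fst_sum, Finset.sum_apply]
    refine Finset.sum_congr rfl fun j' _ => ?_
    simp [emb, Pi.single_apply]
  have hx1nn : 0 ≤ x.1 q.1 := by
    rw [hx1]; apply Finset.sum_nonneg; intro q' _; split
    · exact hwx0 q'
    · exact le_rfl
  have hz1nn : 0 ≤ z.1 q.1 := by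
    rw [hz1]; apply Finset.sum_nonneg; intro j' _; split <;> norm_num
  have hdecomp : y.1 q.1 = (1 - ε * (J.card:ℝ)) * x.1 q.1 + ε * z.1 q.1 := by
    rw [hyrepr]; rfl
  have hcases : 0 < x.1 q.1 ∨ 0 < z.1 q.1 := by
    by_contra h
    push_neg at h
    obtain ⟨ha, hb⟩ := h
    nlinarith [hy1pos, hdecomp, hεnn, hε0]
  rcases hcases with hc | hc
  · rw [hx1] at hc
    have hex2 : ∃ q' : Fin m × Fin n, 0 < (if q'.1 = q.1 then wx q' else 0) := by
      by_contra h; push_neg at h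
      have := Finset.sum_nonpos (fun q' (_ : q' ∈ Finset.univ) => h q')
      linarith
    obtain ⟨q', hq'⟩ := hex2
    have h1 : q'.1 = q.1 := by by_contra h; rw [if_neg h] at hq'; exact lt_irrefl 0 hq'
    rw [if_pos h1] at hq'
    have hq'σ : q' ∈ σ := hwxsupp q' (ne_of_gt hq')
    refine ⟨q.1, ?_, q'.2, ?_⟩
    · rw [hqeq]; exact hqτ
    · rw [← h1]; exact hq'σ
  · rw [hz1] at hc
    have hex2 : ∃ j' ∈ J, 0 < (if q.1 = I j' then (1:ℝ) else 0) := by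
      by_contra h; push_neg at h
      have := Finset.sum_nonpos h
      linarith
    obtain ⟨j', hj'J, hj'⟩ := hex2
    have h1 : q.1 = I j' := by by_contra h; rw [if_neg h] at hj'; exact lt_irrefl 0 hj'
    obtain ⟨-, j'', hj''⟩ := hIspec j' hj'J
    refine ⟨q.1, ?_, j'', ?_⟩
    · rw [hqeq]; exact hqτ
    · rw [h1]; exact hj''
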